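/- Let ⟨C_{α,i} : α ∈ acc(μ⁺), i(α) ≤ i < cf(μ)⟩ be a □^{ind}_{μ,cf(μ)}-sequence, and define c on pairs of limit ordinals below μ⁺ by letting c(α, β) be the least i with i(β) ≤ i and α ∈ acc(C_{β,i}). If i < cf(μ), Λ ⊆ i, and X ⊆ acc(μ⁺) is well-connected in Λ, then for all α < β in X, α ∈ acc(C_{β,i}). -/

import Mathlib

open Cardinal Set

noncomputable section

/-- The color of the unordered pair `{a,b}` under `c`. -/
def pairColor (c : Ordinal → Ordinal → Ordinal) (a b : Ordinal) : Ordinal :=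
  c (min a b) (max a b)

/-- `X` is well-connected in the set of colors `Λ` with respect to `c`, with the
connecting paths allowed to use any vertices from `Dom`. -/
def WellConnectedIn (Dom : Set Ordinal) (c : Ordinal → Ordinal → Ordinal)
    (Λ : Set Ordinal) (X : Set Ordinal) : Prop :=
  ∀ α ∈ X, ∀ β ∈ X, α < β →
    ∃ (n : ℕ) (f : ℕ → Ordinal), f 0 = α ∧ f n = β ∧
      (∀ k ≤ n, α ≤ f k ∧ f k ∈ Dom) ∧
      (∀ k < n, f k ≠ f (k + 1) ∧ pairColor c (f k) (f (k + 1)) ∈ Λ)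

/-- The set of accumulation points of a set of ordinals. -/
def accPts (C : Set Ordinal) : Set Ordinal :=
  {β | (C ∩ Set.Iio β).Nonempty ∧ sSup (C ∩ Set.Iio β) = β}

/-- `C` is club in `α`. -/
def IsClubIn (C : Set Ordinal) (α : Ordinal) : Prop :=
  C ⊆ Set.Iio α ∧ (∀ β < α, ∃ γ ∈ C, β ≤ γ) ∧ accPts C ∩ Set.Iio α ⊆ C

/-- A `□^{ind}_{μ, cf(μ)}`-sequence `⟨C α i : α ∈ acc(μ⁺), i(α) ≤ i < cf(μ)⟩`,
together with the witnessing sequence `⟨μseq i : i < cf(μ)⟩` of regular cardinals. -/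
def IsIndexedSquareSeqSucc (μ : Cardinal.{0}) (iidx : Ordinal → Ordinal)
    (C : Ordinal → Ordinal → Set Ordinal) (μseq : Ordinal → Cardinal.{0}) : Prop :=
  letI ν := (Order.succ μ).ord
  letI cf := (μ.ord.cof).ord
  -- (1) indices below cf(μ)
  (∀ α, α < ν → Order.IsSuccLimit α → iidx α < cf) ∧
  -- (2) clubs
  (∀ α, α < ν → Order.IsSuccLimit α → ∀ i, iidx α ≤ i → i < cf → IsClubIn (C α i) α) ∧
  -- (3) monotonicity
  (∀ α, α < ν → Order.IsSuccLimit α → ∀ i j, iidx α ≤ i → i ≤ j → j < cf →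
    C α i ⊆ C α j) ∧
  -- (4) coherence
  (∀ α β, α < β → β < ν → Order.IsSuccLimit α → Order.IsSuccLimit β →
    ∀ i, iidx β ≤ i → i < cf → α ∈ accPts (C β i) →
      iidx α ≤ i ∧ C α i = C β i ∩ Set.Iio α) ∧
  -- (5) every pair is connected at some index
  (∀ α β, α < β → β < ν → Order.IsSuccLimit α → Order.IsSuccLimit β →
    ∃ i, iidx β ≤ i ∧ i < cf ∧ α ∈ accPts (C β i)) ∧
  -- (6) the cardinals μseq i are regular, increasing and cofinal in μ,
  --     and bound the sizes of the clubs
  (∀ i, i < cf → (μseq i).IsRegular) ∧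
  (∀ i j, i ≤ j → j < cf → μseq i ≤ μseq j) ∧
  (∀ χ, χ < μ → ∃ i, i < cf ∧ χ ≤ μseq i) ∧
  (∀ α, α < ν → Order.IsSuccLimit α → ∀ i, iidx α ≤ i → i < cf →
    #(C α i) < Cardinal.lift.{1} (μseq i))

/-- `c (α, β)` is the least `i` with `i(β) ≤ i` and `α ∈ acc(C β i)`. -/
def IsLeastIndexColoring (μ : Cardinal.{0}) (iidx : Ordinal → Ordinal)
    (C : Ordinal → Ordinal → Set Ordinal) (c : Ordinal → Ordinal → Ordinal) : Prop :=
  ∀ α β, α < β → β < (Order.succ μ).ord → Order.IsSuccLimit α → Order.IsSuccLimit β →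
    (iidx β ≤ c α β ∧ α ∈ accPts (C β (c α β)) ∧
      ∀ j, iidx β ≤ j → α ∈ accPts (C β j) → c α β ≤ j)


lemma accPts_mono_aux {S T : Set Ordinal} (h : S ⊆ T) : accPts S ⊆ accPts T := by
  rintro α ⟨⟨x, hxS, hxlt⟩, hsup⟩
  have hne : (T ∩ Set.Iio α).Nonempty := ⟨x, h hxS, hxlt⟩
  have h1 : sSup (S ∩ Set.Iio α) ≤ sSup (T ∩ Set.Iio α) :=
    csSup_le_csSup ⟨α, fun y hy => le_of_lt hy.2⟩ ⟨x, hxS, hxlt⟩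
      (Set.inter_subset_inter_left _ h)
  exact ⟨hne, le_antisymm (csSup_le hne fun y hy => le_of_lt hy.2)
    (le_trans (le_of_eq hsup.symm) h1)⟩

lemma accPts_inter_Iio_aux {S : Set Ordinal} {α δ : Ordinal} (h : α ≤ δ) :
    α ∈ accPts (S ∩ Set.Iio δ) ↔ α ∈ accPts S := by
  have he : S ∩ Set.Iio δ ∩ Set.Iio α = S ∩ Set.Iio α := by
    rw [Set.inter_assoc, Set.Iio_inter_Iio, min_eq_right h]
  unfold accPts
  simp only [Set.mem_setOf_eq, he]

/-- If `X ⊆ acc(μ⁺)` is well-connected in a set of colors `Λ ⊆ i`, with respect to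
the coloring derived from a `□^{ind}_{μ,cf(μ)}`-sequence, then `α ∈ acc(C β i)`
for all `α < β` in `X`. -/
theorem stmt12 (μ : Cardinal.{0}) (hμinf : ℵ₀ ≤ μ) (hsing : ¬ μ.IsRegular)
    (iidx : Ordinal → Ordinal) (C : Ordinal → Ordinal → Set Ordinal)
    (μseq : Ordinal → Cardinal.{0})
    (hseq : IsIndexedSquareSeqSucc μ iidx C μseq)
    (c : Ordinal → Ordinal → Ordinal) (hc : IsLeastIndexColoring μ iidx C c)
    (i : Ordinal) (hi : i < (μ.ord.cof).ord) (Λ : Set Ordinal) (hΛ : Λ ⊆ Set.Iio i)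
    (X : Set Ordinal) (hX : X ⊆ {α | α < (Order.succ μ).ord ∧ Order.IsSuccLimit α})
    (hwc : WellConnectedIn {α | α < (Order.succ μ).ord ∧ Order.IsSuccLimit α} c Λ X) :
    ∀ α ∈ X, ∀ β ∈ X, α < β → α ∈ accPts (C β i) := by
  intro α hαX β hβX hαβ
  obtain ⟨hαν, hαlim⟩ := hX hαX
  obtain ⟨h1, h2, h3, h4, h5, _⟩ := hseq
  obtain ⟨n, f, hf0, hfn, hdom, hcol⟩ := hwc α hαX β hβX hαβ
  have key : ∀ k, k ≤ n → f k = α ∨ α ∈ accPts (C (f k) i) := by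
    intro k
    induction k with
    | zero => intro _; left; exact hf0
    | succ k ih =>
      intro hk
      have hkn : k < n := hk
      have ihk := ih (le_trans (Nat.le_succ k) hk)
      obtain ⟨hne, hcolΛ⟩ := hcol k hkn
      set γ := f k with hγdef
      set δ := f (k + 1) with hδdef
      obtain ⟨hαγ, hγν, hγlim⟩ :=
        And.intro (hdom k (le_of_lt hkn)).1 (hdom k (le_of_lt hkn)).2
      obtain ⟨hαδ, hδν, hδlim⟩ := And.intro (hdom (k+1) hk).1 (hdom (k+1) hk).2
      by_cases hδα : δ = α
      · exact Or.inl hδα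
      have hαδ' : α < δ := lt_of_le_of_ne hαδ (fun h => hδα h.symm)
      right
      by_cases hγα : γ = α
      · -- first vertex is α itself
        have hlt : α < δ := hαδ'
        have hpc : pairColor c γ δ = c α δ := by
          rw [pairColor, hγα, min_eq_left (le_of_lt hlt), max_eq_right (le_of_lt hlt)]
        have hcΛ : c α δ ∈ Λ := hpc ▸ hcolΛ
        have hci : c α δ < i := hΛ hcΛ
        obtain ⟨hidx, hacc, _⟩ := hc α δ hlt hδν hαlim hδlim
        exact accPts_mono_aux
          (h3 δ hδν hδlim (c α δ) i hidx (le_of_lt hci) hi) hacc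
      · have hacc : α ∈ accPts (C γ i) := ihk.resolve_left hγα
        have hαγ' : α < γ := lt_of_le_of_ne hαγ (fun h => hγα h.symm)
        rcases lt_trichotomy γ δ with hγδ | hγδ | hγδ
        · -- γ < δ
          have hpc : pairColor c γ δ = c γ δ := by
            rw [pairColor, min_eq_left (le_of_lt hγδ), max_eq_right (le_of_lt hγδ)]
          have hci : c γ δ < i := hΛ (hpc ▸ hcolΛ)
          obtain ⟨hidx, haccγ, _⟩ := hc γ δ hγδ hδν hγlim hδlim
          have haccγi : γ ∈ accPts (C δ i) :=
            accPts_mono_aux (h3 δ hδν hδlim (c γ δ) i hidx (le_of_lt hci) hi) haccγ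
          obtain ⟨_, hcoh⟩ := h4 γ δ hγδ hδν hγlim hδlim i
            (le_trans hidx (le_of_lt hci)) hi haccγi
          rw [hcoh] at hacc
          exact (accPts_inter_Iio_aux (le_of_lt hαγ')).mp hacc
        · exact absurd hγδ hne
        · -- δ < γ
          have hpc : pairColor c γ δ = c δ γ := by
            rw [pairColor, min_eq_right (le_of_lt hγδ), max_eq_left (le_of_lt hγδ)]
          have hci : c δ γ < i := hΛ (hpc ▸ hcolΛ)
          obtain ⟨hidx, haccδ, _⟩ := hc δ γ hγδ hγν hδlim hγlim
          have haccδi : δ ∈ accPts (C γ i) :=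
            accPts_mono_aux (h3 γ hγν hγlim (c δ γ) i hidx (le_of_lt hci) hi) haccδ
          obtain ⟨_, hcoh⟩ := h4 δ γ hγδ hγν hδlim hγlim i
            (le_trans hidx (le_of_lt hci)) hi haccδi
          rw [hcoh]
          exact (accPts_inter_Iio_aux (le_of_lt hαδ')).mpr hacc
  have := key n le_rfl
  rw [hfn] at this
  exact this.resolve_left (fun h => absurd (h ▸ hαβ) (lt_irrefl α))


end
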